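/- For all positive integers a and b with gcd(a,b) = 1, the product {a}!·{b}!·{a+b} divides {a+b}! in Z[s,t]; that is, the Lucas analogue of the rational Catalan number, Cat{a,b} = (1/{a+b})·{a+b choose a}_L, is a polynomial in s and t (with integer coefficients). -/

import Mathlib

open MvPolynomial Finset

noncomputable section

/-- Polynomial ring ℤ[s,t] with s = X 0, t = X 1. -/
abbrev P2 : Type := MvPolynomial (Fin 2) ℤ

def ps : P2 := X 0
def pt : P2 := X 1

/-- The Lucas sequence of polynomials: {0}=0, {1}=1, {n}=s{n-1}+t{n-2}. -/
def lucas : ℕ → P2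
  | 0 => 0
  | 1 => 1
  | (n+2) => ps * lucas (n+1) + pt * lucas n

/-- The Lucastorial {n}! = {1}{2}⋯{n}. -/
def lucasFact (n : ℕ) : P2 := ∏ i ∈ Finset.range n, lucas (i+1)

/-- The d-divisible Lucastorial {n:d}! = {d}{2d}⋯{nd}. -/
def lucasFactD (d n : ℕ) : P2 := ∏ i ∈ Finset.range n, lucas (d*(i+1))

/-- A polynomial lies in ℕ[s,t]: all coefficients are nonnegative. -/
def Nonneg (p : P2) : Prop := ∀ m, 0 ≤ p.coeff m

/-- The fraction field ℤ(s,t). -/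
abbrev K : Type := FractionRing P2

def φ : P2 →+* K := algebraMap P2 K

def L (n : ℕ) : K := φ (lucas n)

def LFact (n : ℕ) : K := φ (lucasFact n)

def LFactD (d n : ℕ) : K := φ (lucasFactD d n)

/-- The Lucasnomial {n choose k}, as an element of the fraction field. -/
def lnom (n k : ℕ) : K := LFact n / (LFact k * LFact (n-k))

/-- The d-divisible Lucasnomial {n:d choose k:d}, as an element of the fraction field. -/
def lnomD (d n k : ℕ) : K := LFactD d n / (LFactD d k * LFactD d (n-k))

/-- The Lucas-Catalan number C_{n} = (1/{n+1}) {2n choose n}. -/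
def catL (n : ℕ) : K := lnom (2*n) n / L (n+1)

/-- The Lucas-Fuss-Catalan number C_{n,k} = (1/{kn+1}) {(k+1)n choose n}. -/
def fussCatL (n k : ℕ) : K := lnom ((k+1)*n) n / L (k*n+1)

lemma lucas_zero : lucas 0 = 0 := rfl
lemma lucas_one : lucas 1 = 1 := rfl
lemma lucas_two_step (n : ℕ) : lucas (n+2) = ps * lucas (n+1) + pt * lucas n := rfl

lemma lucasFact_succ (n : ℕ) : lucasFact (n+1) = lucasFact n * lucas (n+1) :=
  Finset.prod_range_succ _ n

/-- Addition formula. -/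
lemma lucas_add (m : ℕ) : ∀ n, lucas (m + n + 1) = lucas (m+1) * lucas (n+1) + pt * lucas m * lucas n := by
  induction m using Nat.twoStepInduction with
  | zero => intro n; simp [lucas_zero, lucas_one]
  | one =>
      intro n
      have h2 : lucas (1+1) = ps := by
        rw [show (1:ℕ)+1 = 0+2 by rfl, lucas_two_step, lucas_zero, lucas_one]; ring
      rw [show 1+n+1 = n+2 by omega, lucas_two_step, h2, lucas_one]; ring
  | more m ih1 ih2 =>
      intro n
      have h0 : lucas (m+2+n+1) = ps * lucas (m+1+n+1) + pt * lucas (m+n+1) := by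
        rw [show m+2+n+1 = (m+n+1)+2 by omega, lucas_two_step, show (m+n+1)+1 = m+1+n+1 by omega]
      have h1 : lucas (m+2+1) = ps * lucas (m+1+1) + pt * lucas (m+1) := by
        rw [show m+2+1 = (m+1)+2 by omega, lucas_two_step]
      have h2 : lucas (m+2) = ps * lucas (m+1) + pt * lucas m := lucas_two_step m
      rw [h0, ih2 n, ih1 n, h1, h2]
      ring

/-- Evaluation at s = 1, t = 0. -/
def ev : P2 →+* ℤ := MvPolynomial.eval (fun i => if i = 0 then 1 else 0)

lemma ev_ps : ev ps = 1 := by simp [ev, ps]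
lemma ev_pt : ev pt = 0 := by simp [ev, pt]

lemma ev_lucas (n : ℕ) : ev (lucas (n+1)) = 1 := by
  induction n using Nat.twoStepInduction with
  | zero => simp [lucas_one]
  | one => rw [lucas_two_step, map_add, map_mul, map_mul, ev_ps, ev_pt, lucas_one]; simp
  | more n ih1 ih2 => rw [lucas_two_step, map_add, map_mul, map_mul, ev_ps, ev_pt, ih2]; simp

lemma lucas_ne_zero (n : ℕ) : lucas (n+1) ≠ 0 := fun h => by
  have := ev_lucas n; rw [h, map_zero] at this; exact zero_ne_one this

lemma lucasFact_ne_zero (n : ℕ) : lucasFact n ≠ 0 := by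
  have : ev (lucasFact n) = 1 := by
    rw [lucasFact, map_prod]
    exact Finset.prod_eq_one (fun i _ => ev_lucas i)
  intro h; rw [h, map_zero] at this; exact zero_ne_one this

lemma pt_not_dvd_lucas (n : ℕ) : ¬ pt ∣ lucas (n+1) := by
  rintro ⟨c, hc⟩
  have := ev_lucas n
  rw [hc, map_mul, ev_pt, zero_mul] at this
  exact zero_ne_one this

lemma prime_pt : Prime pt := by
  rw [pt, ← MulEquiv.prime_iff (MvPolynomial.renameEquiv ℤ (Equiv.swap (0:Fin 2) 1)).toMulEquiv]
  rw [← MulEquiv.prime_iff (MvPolynomial.finSuccEquiv ℤ 1).toMulEquiv]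
  show Prime ((MvPolynomial.finSuccEquiv ℤ 1) ((MvPolynomial.renameEquiv ℤ (Equiv.swap (0:Fin 2) 1)) (X 1)))
  rw [renameEquiv_apply, rename_X, Equiv.swap_apply_right, finSuccEquiv_X_zero]
  exact Polynomial.prime_X

lemma isRelPrime_pt_lucas (n : ℕ) : IsRelPrime pt (lucas (n+1)) := by
  intro d hdt hdl
  obtain ⟨c, hc⟩ := hdt
  rcases prime_pt.irreducible.isUnit_or_isUnit hc with h | h
  · exact h
  · exfalso
    obtain ⟨u, rfl⟩ := h
    have hptd : pt ∣ d := ⟨↑u⁻¹, by rw [hc, mul_assoc, Units.mul_inv, mul_one]⟩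
    exact pt_not_dvd_lucas n (hptd.trans hdl)

lemma isRelPrime_lucas_consec : ∀ n : ℕ, IsRelPrime (lucas n) (lucas (n+1)) := by
  intro n
  induction n with
  | zero => exact fun d _ h1 => isUnit_of_dvd_one (lucas_one ▸ h1)
  | succ n ih =>
      intro d h1 h2
      have hd_rp_pt : IsRelPrime d pt := (isRelPrime_pt_lucas n).symm.of_dvd_left h1
      have hdvd : d ∣ pt * lucas n := by
        have : pt * lucas n = lucas (n+2) - ps * lucas (n+1) := by rw [lucas_two_step]; ring
        rw [this]
        exact dvd_sub h2 (Dvd.dvd.mul_left h1 ps)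
      have hdl : d ∣ lucas n := hd_rp_pt.dvd_of_dvd_mul_left hdvd
      exact ih hdl h1

/-- Euclid step. -/
lemma isRelPrime_lucas_step (m n : ℕ) (h : IsRelPrime (lucas m) (lucas (n+1))) :
    IsRelPrime (lucas (m+n+1)) (lucas (n+1)) := by
  intro d hd1 hd2
  have hdvd : d ∣ pt * (lucas m * lucas n) := by
    have : pt * (lucas m * lucas n) = lucas (m+n+1) - lucas (m+1) * lucas (n+1) := by
      rw [lucas_add]; ring
    rw [this]
    exact dvd_sub hd1 (Dvd.dvd.mul_left hd2 (lucas (m+1)))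
  have hd_rp_pt : IsRelPrime d pt := (isRelPrime_pt_lucas n).symm.of_dvd_left hd2
  have h1 : d ∣ lucas m * lucas n := hd_rp_pt.dvd_of_dvd_mul_left hdvd
  have hd_rp_n : IsRelPrime d (lucas n) := (isRelPrime_lucas_consec n).symm.of_dvd_left hd2
  have h2 : d ∣ lucas m := hd_rp_n.dvd_of_dvd_mul_right h1
  exact h h2 hd2

lemma isRelPrime_lucas : ∀ k m n : ℕ, m + n = k → 0 < m → 0 < n → Nat.gcd m n = 1 →
    IsRelPrime (lucas m) (lucas n) := by
  intro k
  induction k using Nat.strong_induction_on with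
  | _ k ih =>
    intro m n hk hm hn hg
    rcases eq_or_ne m 1 with rfl | hm1
    · exact lucas_one ▸ isRelPrime_one_left
    rcases eq_or_ne n 1 with rfl | hn1
    · exact lucas_one ▸ isRelPrime_one_right
    have hmn : m ≠ n := by
      rintro rfl; rw [Nat.gcd_self] at hg; exact hm1 hg
    rcases lt_or_gt_of_ne hmn with hlt | hgt
    · -- m < n : reduce to (n - m, m)
      have hrec : IsRelPrime (lucas (n - m)) (lucas m) :=
        ih (n - m + m) (by omega) (n - m) m rfl (by omega) hm
          (by rw [Nat.gcd_sub_self_left hlt.le, Nat.gcd_comm]; exact hg)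
      have := isRelPrime_lucas_step (n - m) (m - 1) (by
        rwa [show m - 1 + 1 = m by omega])
      rw [show n - m + (m - 1) + 1 = n by omega, show m - 1 + 1 = m by omega] at this
      exact this.symm
    · -- n < m
      have hrec : IsRelPrime (lucas (m - n)) (lucas n) :=
        ih (m - n + n) (by omega) (m - n) n rfl (by omega) hn
          (by rw [Nat.gcd_sub_self_left hgt.le]; exact hg)
      have := isRelPrime_lucas_step (m - n) (n - 1) (by
        rwa [show n - 1 + 1 = n by omega])
      rw [show m - n + (n - 1) + 1 = m by omega, show n - 1 + 1 = n by omega] at this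
      exact this

/-- Lucasnomial divisibility: {j}!{k}! divides {j+k}!. -/
lemma lucasFact_mul_dvd : ∀ N j k : ℕ, j + k = N → lucasFact j * lucasFact k ∣ lucasFact (j + k) := by
  intro N
  induction N using Nat.strong_induction_on with
  | _ N ih =>
    intro j k hN
    match j, k with
    | 0, k => simp [lucasFact]
    | j, 0 => simp [lucasFact]
    | (j'+1), (k'+1) =>
      obtain ⟨Xp, hX⟩ := ih (j' + k' + 1) (by omega) (k'+1) j' (by omega)
      obtain ⟨Yp, hY⟩ := ih (j' + k' + 1) (by omega) k' (j'+1) (by omega)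
      rw [show k' + 1 + j' = j' + k' + 1 by omega] at hX
      rw [show k' + (j' + 1) = j' + k' + 1 by omega] at hY
      refine ⟨lucas (k'+2) * Xp + pt * lucas j' * Yp, ?_⟩
      rw [show j' + 1 + (k' + 1) = (j' + k' + 1) + 1 by omega, lucasFact_succ]
      have hAdd : lucas (j'+k'+1+1) = lucas (k'+2) * lucas (j'+1) + pt * lucas (k'+1) * lucas j' := by
        rw [show j'+k'+1+1 = (k'+1)+j'+1 by omega, lucas_add]
      rw [hAdd, lucasFact_succ j', lucasFact_succ k'] at *
      linear_combination (lucas (k'+2) * lucas (j'+1)) * hX + (pt * lucas (k'+1) * lucas j') * hY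

/-- for positive coprime a, b, {a}!{b}!{a+b} divides {a+b}!,
i.e. the Lucas rational Catalan analogue Cat{a,b} is a polynomial in ℤ[s,t]. -/
theorem rationalCatalan_polynomial (a b : ℕ) (ha : 0 < a) (hb : 0 < b)
    (hab : Nat.gcd a b = 1) :
    ∃ p : P2, lucasFact (a+b) = p * (lucasFact a * lucasFact b * lucas (a+b)) := by
  obtain ⟨a', rfl⟩ : ∃ a', a = a' + 1 := ⟨a - 1, by omega⟩
  obtain ⟨b', rfl⟩ : ∃ b', b = b' + 1 := ⟨b - 1, by omega⟩
  set a := a' + 1 with hadef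
  set b := b' + 1 with hbdef
  obtain ⟨Xp, hX⟩ := lucasFact_mul_dvd (a + b') a b' rfl
  obtain ⟨Yp, hY⟩ := lucasFact_mul_dvd (a' + b) a' b rfl
  rw [show a' + b = a + b' by omega] at hY
  have hFa : lucasFact a = lucasFact a' * lucas a := lucasFact_succ a'
  have hFb : lucasFact b = lucasFact b' * lucas b := lucasFact_succ b'
  have key : (lucasFact a' * lucasFact b') * (lucas a * Xp)
      = (lucasFact a' * lucasFact b') * (lucas b * Yp) := by
    linear_combination -hX + hY - (lucasFact b' * Xp) * hFa + (lucasFact a' * Yp) * hFb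
  have hne : lucasFact a' * lucasFact b' ≠ 0 :=
    mul_ne_zero (lucasFact_ne_zero a') (lucasFact_ne_zero b')
  have hcanc : lucas a * Xp = lucas b * Yp := mul_left_cancel₀ hne key
  have hrp : IsRelPrime (lucas b) (lucas a) :=
    isRelPrime_lucas (b + a) b a rfl hb ha (by rwa [Nat.gcd_comm])
  have hdvd : lucas b ∣ Xp := hrp.dvd_of_dvd_mul_left ⟨Yp, by linear_combination hcanc⟩
  obtain ⟨Zp, hZ⟩ := hdvd
  refine ⟨Zp, ?_⟩
  rw [show a + b = (a + b') + 1 by omega, lucasFact_succ]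
  linear_combination (lucas (a+b'+1)) * hX + (lucas (a+b'+1) * lucasFact a * lucasFact b') * hZ - (lucas (a+b'+1) * lucasFact a * Zp) * hFb
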